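/- Let 𝕄 be a nonnegative primitive n×n matrix with spectral radius ρ. If v and w are vectors with strictly positive entries and μ, ν > 0 satisfy 𝕄v = μv and 𝕄w = νw, then μ = ν = ρ and w is a positive scalar multiple of v. -/

import Mathlib

open Matrix Module.End in
private lemma pf_mem_spectrum_iff {n : ℕ} (A : Matrix (Fin n) (Fin n) ℂ) (lam : ℂ) :
    lam ∈ spectrum ℂ A ↔ ∃ z : Fin n → ℂ, z ≠ 0 ∧ A.mulVec z = lam • z := by
  rw [← AlgEquiv.spectrum_eq (Matrix.toLinAlgEquiv' (R := ℂ) (n := Fin n)),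
    ← Module.End.hasEigenvalue_iff_mem_spectrum]
  constructor
  · intro h
    obtain ⟨z, hz⟩ := h.exists_hasEigenvector
    exact ⟨z, hz.2, by simpa [Matrix.toLinAlgEquiv'_apply, Matrix.toLin'_apply]
      using hz.apply_eq_smul⟩
  · rintro ⟨z, hz0, hz⟩
    apply hasEigenvalue_of_hasEigenvector (x := z)
    refine ⟨mem_eigenspace_iff.mpr ?_, hz0⟩
    simpa [Matrix.toLinAlgEquiv'_apply, Matrix.toLin'_apply] using hz

/-- Comparison lemma: if `𝕄 v = μ v` with `v > 0`, `x ≥ 0` nonzero, and `r • x ≤ 𝕄 x`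
componentwise, then `r ≤ μ`. -/
private lemma pf_compare {n : ℕ} (𝕄 : Matrix (Fin n) (Fin n) ℝ)
    (hnn : ∀ i j, 0 ≤ 𝕄 i j) (v : Fin n → ℝ) (hv : ∀ i, 0 < v i) (μ : ℝ)
    (hMv : 𝕄.mulVec v = μ • v) (x : Fin n → ℝ) (hx : ∀ i, 0 ≤ x i)
    (hx0 : ∃ j, 0 < x j) (r : ℝ) (hr : ∀ i, r * x i ≤ 𝕄.mulVec x i) : r ≤ μ := by
  obtain ⟨j, hj⟩ := hx0
  obtain ⟨i0, -, hi0⟩ := Finset.exists_max_image Finset.univ (fun i => x i / v i)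
    ⟨j, Finset.mem_univ j⟩
  set c := x i0 / v i0 with hc
  have hcpos : 0 < c := lt_of_lt_of_le (div_pos hj (hv j)) (hi0 j (Finset.mem_univ j))
  have hxle : ∀ i, x i ≤ c * v i := fun i =>
    (div_le_iff₀ (hv i)).mp (hi0 i (Finset.mem_univ i))
  have hxi0 : x i0 = c * v i0 := by
    rw [hc, div_mul_cancel₀ _ (ne_of_gt (hv i0))]
  have h1 : r * x i0 ≤ μ * x i0 := by
    calc r * x i0 ≤ 𝕄.mulVec x i0 := hr i0
    _ ≤ 𝕄.mulVec (fun i => c * v i) i0 := by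
        simp only [Matrix.mulVec, dotProduct]
        exact Finset.sum_le_sum fun k _ =>
          mul_le_mul_of_nonneg_left (hxle k) (hnn i0 k)
    _ = c * 𝕄.mulVec v i0 := by
        simp only [Matrix.mulVec, dotProduct, Finset.mul_sum]
        exact Finset.sum_congr rfl fun k _ => by ring
    _ = c * (μ * v i0) := by rw [hMv]; simp [mul_comm]
    _ = μ * x i0 := by rw [hxi0]; ring
  have hxi0pos : 0 < x i0 := hxi0 ▸ mul_pos hcpos (hv i0)
  exact le_of_mul_le_mul_right (by simpa [mul_comm] using h1) hxi0pos

theorem stmt_16 (n : ℕ) (𝕄 : Matrix (Fin n) (Fin n) ℝ)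
    (hnn : ∀ i j, 0 ≤ 𝕄 i j)
    (hprim : ∃ p : ℕ, 1 ≤ p ∧ ∀ i j, 0 < (𝕄 ^ p) i j)
    (ρ : ℝ)
    (hρ : IsGreatest {r : ℝ | ∃ μ : ℂ, μ ∈ spectrum ℂ (𝕄.map (Complex.ofReal ·)) ∧ ‖μ‖ = r} ρ)
    (v w : Fin n → ℝ) (hv : ∀ i, 0 < v i) (hw : ∀ i, 0 < w i)
    (μ ν : ℝ) (hμ : 0 < μ) (hν : 0 < ν)
    (hMv : 𝕄.mulVec v = μ • v) (hMw : 𝕄.mulVec w = ν • w) :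
    μ = ρ ∧ ν = ρ ∧ ∃ c : ℝ, 0 < c ∧ w = c • v := by
  rcases Nat.eq_zero_or_pos n with hn | hn
  · -- degenerate case: empty matrix has empty spectrum, contradicting hρ.1
    subst hn
    obtain ⟨lam, hlam, -⟩ := hρ.1
    rw [spectrum.mem_iff] at hlam
    exact absurd (isUnit_of_subsingleton _) hlam
  haveI : NeZero n := ⟨Nat.pos_iff_ne_zero.mp hn⟩
  set A := 𝕄.map (Complex.ofReal ·) with hA
  -- every element of the spectrum has absolute value ≤ μ
  have habs_le : ∀ lam : ℂ, lam ∈ spectrum ℂ A → ‖lam‖ ≤ μ := by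
    intro lam hlam
    obtain ⟨z, hz0, hz⟩ := (pf_mem_spectrum_iff A lam).mp hlam
    obtain ⟨j, hj⟩ : ∃ j, z j ≠ 0 := by
      by_contra h; push_neg at h; exact hz0 (funext h)
    refine pf_compare 𝕄 hnn v hv μ hMv (fun i => ‖z i‖)
      (fun i => (norm_nonneg _)) ⟨j, by simpa using hj⟩ _ (fun i => ?_)
    have : ‖lam * z i‖ = ‖(A.mulVec z) i‖ := by
      rw [hz]; simp
    rw [norm_mul] at this
    rw [this]
    have : (A.mulVec z) i = ∑ k, (𝕄 i k : ℂ) * z k := by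
      simp [hA, Matrix.mulVec, dotProduct, Matrix.map_apply]
    rw [this]
    calc ‖∑ k, (𝕄 i k : ℂ) * z k‖
        ≤ ∑ k, ‖(𝕄 i k : ℂ) * z k‖ := norm_sum_le _ _
      _ = ∑ k, 𝕄 i k * ‖z k‖ := by
          refine Finset.sum_congr rfl fun k _ => ?_
          rw [norm_mul, Complex.norm_real, Real.norm_of_nonneg (hnn i k)]
      _ = 𝕄.mulVec (fun i => ‖z i‖) i := by
          simp [Matrix.mulVec, dotProduct]
  -- μ is in the spectrum
  have hμ_mem : (μ : ℂ) ∈ spectrum ℂ A := by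
    rw [pf_mem_spectrum_iff]
    refine ⟨fun i => (v i : ℂ), ?_, ?_⟩
    · intro h
      have := congrFun h 0
      simp only [Pi.zero_apply, Complex.ofReal_eq_zero] at this
      exact (ne_of_gt (hv 0)) this
    · funext i
      have hvi := congrFun hMv i
      simp only [Pi.smul_apply, smul_eq_mul] at hvi
      simp only [hA, Matrix.mulVec, dotProduct, Matrix.map_apply, Pi.smul_apply,
        smul_eq_mul]
      push_cast
      rw [show ∑ k, (𝕄 i k : ℂ) * (v k : ℂ) = ((∑ k, 𝕄 i k * v k : ℝ) : ℂ) by push_cast; rfl]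
      rw [show (∑ k, 𝕄 i k * v k : ℝ) = μ * v i from hvi]
      push_cast; rfl
  have hμρ : μ = ρ := by
    refine le_antisymm ?_ ?_
    · exact hρ.2 ⟨(μ : ℂ), hμ_mem, by rw [Complex.norm_real, Real.norm_of_nonneg hμ.le]⟩
    · obtain ⟨lam, hlam, hlamabs⟩ := hρ.1
      rw [← hlamabs]; exact habs_le lam hlam
  -- ν = μ by two applications of the comparison lemma
  have hνμ : ν = μ := by
    refine le_antisymm ?_ ?_
    · exact pf_compare 𝕄 hnn v hv μ hMv w (fun i => (hw i).le) ⟨0, hw 0⟩ ν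
        (fun i => by rw [hMw]; simp)
    · exact pf_compare 𝕄 hnn w hw ν hMw v (fun i => (hv i).le) ⟨0, hv 0⟩ μ
        (fun i => by rw [hMv]; simp)
  -- w is a multiple of v
  obtain ⟨p, hp1, hpp⟩ := hprim
  obtain ⟨i0, -, hi0⟩ := Finset.exists_min_image Finset.univ (fun i => w i / v i)
    ⟨0, Finset.mem_univ 0⟩
  set c := w i0 / v i0 with hc
  have hcpos : 0 < c := div_pos (hw i0) (hv i0)
  set u : Fin n → ℝ := w - c • v with hu
  have hu_nn : ∀ i, 0 ≤ u i := by
    intro i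
    have := hi0 i (Finset.mem_univ i)
    have : c * v i ≤ w i := (le_div_iff₀ (hv i)).mp this
    simp only [hu, Pi.sub_apply, Pi.smul_apply, smul_eq_mul]
    linarith
  have hu_i0 : u i0 = 0 := by
    simp only [hu, Pi.sub_apply, Pi.smul_apply, smul_eq_mul, hc]
    rw [div_mul_cancel₀ _ (ne_of_gt (hv i0))]; ring
  have hMu : 𝕄.mulVec u = μ • u := by
    simp only [hu, Matrix.mulVec_sub, Matrix.mulVec_smul, hMv, hMw, hνμ, smul_sub]
    rw [smul_comm c μ v]
  have hMpu : ∀ k : ℕ, (𝕄 ^ k).mulVec u = (μ ^ k) • u := by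
    intro k
    induction k with
    | zero => simp [Matrix.mulVec_one]
    | succ k ih =>
        rw [pow_succ', ← Matrix.mulVec_mulVec, ih, Matrix.mulVec_smul, hMu, smul_smul,
          pow_succ', mul_comm]
  have hu0 : u = 0 := by
    by_contra h
    obtain ⟨j, hj⟩ : ∃ j, u j ≠ 0 := by
      by_contra h'; push_neg at h'; exact h (funext h')
    have hjpos : 0 < u j := lt_of_le_of_ne (hu_nn j) (Ne.symm hj)
    have h1 : ((𝕄 ^ p).mulVec u) i0 = 0 := by
      rw [hMpu p]; simp [hu_i0]
    have h2 : 0 < ((𝕄 ^ p).mulVec u) i0 := by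
      simp only [Matrix.mulVec, dotProduct]
      refine Finset.sum_pos' (fun k _ => mul_nonneg (hpp i0 k).le (hu_nn k))
        ⟨j, Finset.mem_univ j, mul_pos (hpp i0 j) hjpos⟩
    exact absurd h1 (ne_of_gt h2)
  refine ⟨hμρ, hνμ.trans hμρ, c, hcpos, ?_⟩
  have := sub_eq_zero.mp hu0
  exact this
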